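/- For α > 0 and f measurable on (0,∞) with absolutely convergent integrals, the left-sided composition formula I^α_{+,2}( s^{1-2α} (I^α_{+,2} f)(s) )(t) = 2^{2α} (I^{2α}_+ ( s f(s) ))(t) holds for almost all t > 0. -/

import Mathlib

open MeasureTheory Real Set

/-- Left-sided modified Erdélyi–Kober fractional integral of order `α`. -/
noncomputable def EKplus (α : ℝ) (f : ℝ → ℝ) (t : ℝ) : ℝ :=
  2 * (Real.Gamma α)⁻¹ * ∫ s in Ioc (0 : ℝ) t, f s * s * (t ^ 2 - s ^ 2) ^ (α - 1)

/-- Left-sided Riemann–Liouville fractional integral of order `α`. -/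
noncomputable def RLplus (α : ℝ) (g : ℝ → ℝ) (t : ℝ) : ℝ :=
  (Real.Gamma α)⁻¹ * ∫ s in Ioc (0 : ℝ) t, g s * (t - s) ^ (α - 1)

lemma my_measurable_rpow_const (c : ℝ) : Measurable (fun y : ℝ => y ^ c) := by
  measurability


lemma beta_integrable {α : ℝ} (hα : 0 < α) :
    IntegrableOn (fun u : ℝ => u ^ (α - 1) * (1 - u) ^ (α - 1)) (Ioo (0:ℝ) 1) := by
  have h := Complex.betaIntegral_convergent (u := (α:ℂ)) (v := (α:ℂ)) (by simpa) (by simpa)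
  rw [intervalIntegrable_iff_integrableOn_Ioo_of_le zero_le_one] at h
  have h2 : IntegrableOn (fun u : ℝ => ‖(u:ℂ) ^ ((α:ℂ) - 1) * (1 - (u:ℂ)) ^ ((α:ℂ) - 1)‖)
      (Ioo (0:ℝ) 1) := h.norm
  refine h2.congr_fun (fun x hx => ?_) measurableSet_Ioo
  have h1x : (0:ℝ) < 1 - x := by linarith [hx.2]
  have e1 : (1 : ℂ) - (x:ℂ) = ((1 - x : ℝ) : ℂ) := by push_cast; ring
  beta_reduce
  rw [norm_mul, e1,
    Complex.norm_cpow_eq_rpow_re_of_pos hx.1, Complex.norm_cpow_eq_rpow_re_of_pos h1x]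
  norm_num

lemma beta_value {α : ℝ} (hα : 0 < α) :
    ∫ u in Ioo (0:ℝ) 1, u ^ (α - 1) * (1 - u) ^ (α - 1) =
      Real.Gamma α ^ 2 / Real.Gamma (2 * α) := by
  have h := Complex.Gamma_mul_Gamma_eq_betaIntegral (s := (α:ℂ)) (t := (α:ℂ)) (by simpa) (by simpa)
  have hbeta : Complex.betaIntegral (α:ℂ) (α:ℂ) =
      ((∫ u in Ioo (0:ℝ) 1, u ^ (α - 1) * (1 - u) ^ (α - 1) : ℝ) : ℂ) := by
    rw [Complex.betaIntegral]
    rw [intervalIntegral.integral_of_le zero_le_one, integral_Ioc_eq_integral_Ioo]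
    have hio := integral_ofReal (𝕜 := ℂ) (f := fun u : ℝ => u ^ (α - 1) * (1 - u) ^ (α - 1))
      (μ := volume.restrict (Ioo (0:ℝ) 1))
    rw [show (((∫ u in Ioo (0:ℝ) 1, u ^ (α - 1) * (1 - u) ^ (α - 1)) : ℝ) : ℂ) =
      ∫ u in Ioo (0:ℝ) 1, ((u ^ (α - 1) * (1 - u) ^ (α - 1) : ℝ) : ℂ) from hio.symm]
    refine setIntegral_congr_fun measurableSet_Ioo fun x hx => ?_
    rw [Complex.ofReal_mul, Complex.ofReal_cpow hx.1.le, Complex.ofReal_cpow (by linarith [hx.2] : (0:ℝ) ≤ 1 - x)]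
    push_cast
    ring
  rw [hbeta] at h
  have h2 : (α:ℂ) + α = ((2*α : ℝ) : ℂ) := by push_cast; ring
  rw [h2, Complex.Gamma_ofReal, Complex.Gamma_ofReal, ← Complex.ofReal_mul, ← Complex.ofReal_mul] at h
  have h3 := Complex.ofReal_injective h
  have hΓ : Real.Gamma (2*α) ≠ 0 := (Real.Gamma_pos_of_pos (by linarith)).ne'
  field_simp
  rw [mul_comm (2:ℝ) α] at h3
  nlinarith [h3]

lemma phi_image {A : ℝ} (hA : 0 < A) :
    (fun u : ℝ => 2 * A * u - A) '' (Ioo (0:ℝ) 1) = Ioo (-A) A := by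
  ext w
  constructor
  · rintro ⟨u, hu, rfl⟩
    simp only [mem_Ioo] at hu ⊢
    constructor <;> nlinarith [hu.1, hu.2]
  · rintro ⟨h1, h2⟩
    refine ⟨(w + A) / (2 * A), ⟨div_pos (by linarith) (by linarith),
      by rw [div_lt_one (by linarith)]; linarith⟩, ?_⟩
    field_simp
    ring

lemma phi_deriv {A : ℝ} (x : ℝ) :
    HasDerivWithinAt (fun u : ℝ => 2 * A * u - A) (2 * A) (Ioo (0:ℝ) 1) x := by
  simpa using (((hasDerivAt_id x).const_mul (2 * A)).sub_const A).hasDerivWithinAt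

lemma phi_inj {A : ℝ} (hA : 0 < A) : InjOn (fun u : ℝ => 2 * A * u - A) (Ioo (0:ℝ) 1) := by
  intro u _ v _ h
  simp only at h
  nlinarith [h]

lemma E_pointwise {α A : ℝ} (hA : 0 < A) {u : ℝ} (hu : u ∈ Ioo (0:ℝ) 1) :
    |2 * A| • (A ^ 2 - (2 * A * u - A) ^ 2) ^ (α - 1)
      = (2 * A) ^ (2 * α - 1) * (u ^ (α - 1) * (1 - u) ^ (α - 1)) := by
  have h2A : (0:ℝ) < 2 * A := by linarith
  have key : A ^ 2 - (2 * A * u - A) ^ 2 = (2 * A) ^ 2 * (u * (1 - u)) := by ring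
  have e1 : (((2 * A) ^ (2:ℕ) : ℝ)) ^ (α - 1) = (2 * A) ^ (2 * (α - 1)) := by
    rw [← Real.rpow_natCast (2 * A) 2, ← Real.rpow_mul h2A.le]
    norm_num
  rw [smul_eq_mul, abs_of_pos h2A, key,
    Real.mul_rpow (by positivity) (by nlinarith [hu.1, hu.2]),
    Real.mul_rpow hu.1.le (by linarith [hu.2] : (0:ℝ) ≤ 1 - u), e1,
    show 2 * A * ((2 * A) ^ (2 * (α - 1)) * (u ^ (α - 1) * (1 - u) ^ (α - 1)))
      = ((2 * A) ^ (1:ℝ) * (2 * A) ^ (2 * (α - 1))) * (u ^ (α - 1) * (1 - u) ^ (α - 1)) by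
        rw [Real.rpow_one]; ring,
    ← Real.rpow_add h2A, show (1:ℝ) + 2 * (α - 1) = 2 * α - 1 by ring]

lemma Esq_value {α A : ℝ} (hα : 0 < α) (hA : 0 < A) :
    ∫ w in Ioo (-A) A, (A ^ 2 - w ^ 2) ^ (α - 1)
      = (2 * A) ^ (2 * α - 1) * (Real.Gamma α ^ 2 / Real.Gamma (2 * α)) := by
  rw [← phi_image hA,
    integral_image_eq_integral_abs_deriv_smul measurableSet_Ioo (fun x _ => phi_deriv x)
      (phi_inj hA)]
  rw [setIntegral_congr_fun measurableSet_Ioo (fun u hu => E_pointwise hA hu)]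
  rw [integral_const_mul, beta_value hα]

lemma Esq_integrable {α A : ℝ} (hα : 0 < α) (hA : 0 < A) :
    IntegrableOn (fun w : ℝ => (A ^ 2 - w ^ 2) ^ (α - 1)) (Ioo (-A) A) := by
  rw [← phi_image hA]
  rw [integrableOn_image_iff_integrableOn_abs_deriv_smul measurableSet_Ioo
    (fun x _ => phi_deriv x) (phi_inj hA)]
  exact IntegrableOn.congr_fun ((beta_integrable hα).const_mul ((2 * A) ^ (2 * α - 1)))
    (fun u hu => (E_pointwise hA hu).symm) measurableSet_Ioo

lemma psi_mem {P : ℝ} (hP : 0 < P) (w : ℝ) :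
    0 ≤ (1 + w / Real.sqrt (w ^ 2 + 4 * P)) / 2 ∧
    (1 + w / Real.sqrt (w ^ 2 + 4 * P)) / 2 ≤ 1 := by
  have hc : 0 < Real.sqrt (w ^ 2 + 4 * P) := Real.sqrt_pos.2 (by positivity)
  have habs : |w| ≤ Real.sqrt (w ^ 2 + 4 * P) := by
    rw [← Real.sqrt_sq_eq_abs]
    exact Real.sqrt_le_sqrt (by nlinarith)
  have h1 : |w / Real.sqrt (w ^ 2 + 4 * P)| ≤ 1 := by
    rw [abs_div, abs_of_pos hc]
    exact div_le_one_of_le₀ habs hc.le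
  have h2 := abs_le.1 h1
  constructor <;> linarith [h2.1, h2.2]

lemma psi_continuous {P : ℝ} (hP : 0 < P) :
    Continuous (fun w : ℝ => (1 + w / Real.sqrt (w ^ 2 + 4 * P)) / 2) := by
  have h : ∀ w : ℝ, Real.sqrt (w ^ 2 + 4 * P) ≠ 0 :=
    fun w => (Real.sqrt_pos.2 (by positivity)).ne'
  fun_prop (disch := exact fun w => h w)

lemma half_value {α A P : ℝ} (hα : 0 < α) (hA : 0 < A) (hP : 0 < P) :
    ∫ w in Ioo (-A) A,
        (A ^ 2 - w ^ 2) ^ (α - 1) * ((1 + w / Real.sqrt (w ^ 2 + 4 * P)) / 2)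
      = 2⁻¹ * ((2 * A) ^ (2 * α - 1) * (Real.Gamma α ^ 2 / Real.Gamma (2 * α))) := by
  set ψ : ℝ → ℝ := fun w => (1 + w / Real.sqrt (w ^ 2 + 4 * P)) / 2 with hψ
  set E : ℝ → ℝ := fun w => (A ^ 2 - w ^ 2) ^ (α - 1) with hE
  have hE_meas : Measurable E := by measurability
  have hψ_cont : Continuous ψ := psi_continuous hP
  have hE_int : IntegrableOn E (Ioo (-A) A) := Esq_integrable hα hA
  have hEnn : ∀ w ∈ Ioo (-A) A, 0 ≤ E w := by
    intro w hw
    exact Real.rpow_nonneg (by nlinarith [hw.1, hw.2]) _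
  -- integrability of E * ψ and E * ψ ∘ neg
  have key_int : ∀ χ : ℝ → ℝ, Continuous χ → (∀ w, 0 ≤ χ w) → (∀ w, χ w ≤ 1) →
      IntegrableOn (fun w => E w * χ w) (Ioo (-A) A) := by
    intro χ hχc hχ0 hχ1
    refine Integrable.mono hE_int ((hE_meas.mul hχc.measurable).aestronglyMeasurable) ?_
    filter_upwards [ae_restrict_mem measurableSet_Ioo] with w hw
    rw [Real.norm_eq_abs, Real.norm_eq_abs, abs_of_nonneg (hEnn w hw),
      abs_of_nonneg (mul_nonneg (hEnn w hw) (hχ0 w))]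
    exact mul_le_of_le_one_right (hEnn w hw) (hχ1 w)
  have hψ0 : ∀ w, 0 ≤ ψ w := fun w => (psi_mem hP w).1
  have hψ1 : ∀ w, ψ w ≤ 1 := fun w => (psi_mem hP w).2
  have hint1 : IntegrableOn (fun w => E w * ψ w) (Ioo (-A) A) := key_int ψ hψ_cont hψ0 hψ1
  have hψn0 : ∀ w, 0 ≤ ψ (-w) := fun w => hψ0 (-w)
  have hψn1 : ∀ w, ψ (-w) ≤ 1 := fun w => hψ1 (-w)
  have hint2 : IntegrableOn (fun w => E w * ψ (-w)) (Ioo (-A) A) :=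
    key_int (fun w => ψ (-w)) (hψ_cont.comp continuous_neg) hψn0 hψn1
  -- reflection
  have hrefl : ∫ w in Ioo (-A) A, E w * ψ w = ∫ w in Ioo (-A) A, E w * ψ (-w) := by
    have himg : Neg.neg '' Ioo (-A) A = Ioo (-A) A := by
      rw [Set.image_neg_Ioo]; simp
    have h1 : ∫ w in Ioo (-A) A, E w * ψ w
        = ∫ w in Ioo (-A) A, |(-1 : ℝ)| • (E (-w) * ψ (-w)) := by
      nth_rewrite 1 [← himg]
      exact integral_image_eq_integral_abs_deriv_smul measurableSet_Ioo
        (fun x _ => (hasDerivAt_neg x).hasDerivWithinAt) neg_injective.injOn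
        (fun w => E w * ψ w)
    rw [h1]
    refine setIntegral_congr_fun measurableSet_Ioo fun w hw => ?_
    have : E (-w) = E w := by simp only [hE]; ring_nf
    rw [abs_neg, abs_one, one_smul, this]
  -- sum
  have hsum : (∫ w in Ioo (-A) A, E w * ψ w) + (∫ w in Ioo (-A) A, E w * ψ (-w))
      = ∫ w in Ioo (-A) A, E w := by
    rw [← integral_add hint1 hint2]
    refine setIntegral_congr_fun measurableSet_Ioo fun w hw => ?_
    have hpsum : ψ w + ψ (-w) = 1 := by
      simp only [hψ]
      have : (-w) ^ 2 = w ^ 2 := by ring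
      rw [this]
      ring
    calc E w * ψ w + E w * ψ (-w) = E w * (ψ w + ψ (-w)) := by ring
      _ = E w := by rw [hpsum, mul_one]
  have hEval : ∫ w in Ioo (-A) A, E w
      = (2 * A) ^ (2 * α - 1) * (Real.Gamma α ^ 2 / Real.Gamma (2 * α)) := Esq_value hα hA
  have : (2:ℝ) * (∫ w in Ioo (-A) A, E w * ψ w)
      = (2 * A) ^ (2 * α - 1) * (Real.Gamma α ^ 2 / Real.Gamma (2 * α)) := by
    rw [← hEval, ← hsum, ← hrefl]; ring
  linarith [this]

lemma kernel_pointwise {α s t P A : ℝ} (hs : 0 < s) (hst : s < t)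
    (hP : P = s * t) (hA : A = t - s) {r : ℝ} (hr : r ∈ Ioo s t) :
    |1 + P / r ^ 2| • ((A ^ 2 - (r - P / r) ^ 2) ^ (α - 1)
        * ((1 + (r - P / r) / Real.sqrt ((r - P / r) ^ 2 + 4 * P)) / 2))
      = (t ^ 2 - r ^ 2) ^ (α - 1) * ((r ^ 2 - s ^ 2) ^ (α - 1) * r ^ (2 - 2 * α)) := by
  have hr0 : 0 < r := lt_trans hs hr.1
  have hsr : s < r := hr.1
  have hrt : r < t := hr.2
  have hP0 : 0 < P := by rw [hP]; exact mul_pos hs (hs.trans hst)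
  have hsqrt : Real.sqrt ((r - P / r) ^ 2 + 4 * P) = r + P / r := by
    have h4 : (r - P / r) ^ 2 + 4 * P = (r + P / r) ^ 2 := by
      field_simp
      ring
    rw [h4, Real.sqrt_sq (by positivity)]
  have hpsi : (1 + (r - P / r) / (r + P / r)) / 2 = r ^ 2 / (r ^ 2 + P) := by
    rw [div_eq_div_iff (by positivity) (by positivity)]
    field_simp
    ring
  have keyA : A ^ 2 - (r - P / r) ^ 2 = (t ^ 2 - r ^ 2) * (r ^ 2 - s ^ 2) / r ^ 2 := by
    rw [hA, hP]
    field_simp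
    ring
  have hrp : ((t ^ 2 - r ^ 2) * (r ^ 2 - s ^ 2) / r ^ 2) ^ (α - 1)
      = (t ^ 2 - r ^ 2) ^ (α - 1) * ((r ^ 2 - s ^ 2) ^ (α - 1) * r ^ (2 - 2 * α)) := by
    have hnum1 : (0:ℝ) ≤ t ^ 2 - r ^ 2 := by nlinarith
    have hnum2 : (0:ℝ) ≤ r ^ 2 - s ^ 2 := by nlinarith
    rw [Real.div_rpow (by positivity) (by positivity), Real.mul_rpow hnum1 hnum2]
    have hden : ((r ^ 2 : ℝ)) ^ (α - 1) = r ^ (2 * α - 2) := by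
      rw [← Real.rpow_natCast r 2, ← Real.rpow_mul hr0.le]
      norm_num
      ring_nf
    rw [hden, div_eq_mul_inv, ← Real.rpow_neg hr0.le,
      show -(2 * α - 2) = 2 - 2 * α by ring]
    ring
  rw [hsqrt, hpsi, keyA, hrp, smul_eq_mul,
    abs_of_pos (by positivity : (0:ℝ) < 1 + P / r ^ 2)]
  have hcancel : (1 + P / r ^ 2) * (r ^ 2 / (r ^ 2 + P)) = 1 := by
    field_simp
  calc (1 + P / r ^ 2) * ((t ^ 2 - r ^ 2) ^ (α - 1) * ((r ^ 2 - s ^ 2) ^ (α - 1)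
          * r ^ (2 - 2 * α)) * (r ^ 2 / (r ^ 2 + P)))
      = ((1 + P / r ^ 2) * (r ^ 2 / (r ^ 2 + P))) * ((t ^ 2 - r ^ 2) ^ (α - 1)
          * ((r ^ 2 - s ^ 2) ^ (α - 1) * r ^ (2 - 2 * α))) := by ring
    _ = (t ^ 2 - r ^ 2) ^ (α - 1) * ((r ^ 2 - s ^ 2) ^ (α - 1) * r ^ (2 - 2 * α)) := by
        rw [hcancel, one_mul]

lemma kernel_value {α s t : ℝ} (hα : 0 < α) (hs : 0 < s) (hst : s < t) :
    ∫ r in Ioo s t, (t ^ 2 - r ^ 2) ^ (α - 1) * ((r ^ 2 - s ^ 2) ^ (α - 1) * r ^ (2 - 2 * α))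
      = 2 ^ (2 * α - 2) * (t - s) ^ (2 * α - 1)
          * (Real.Gamma α ^ 2 / Real.Gamma (2 * α)) := by
  set P := s * t with hP
  set A := t - s with hA
  have hP0 : 0 < P := mul_pos hs (hs.trans hst)
  have hA0 : 0 < A := by rw [hA]; linarith
  set w : ℝ → ℝ := fun r => r - P / r with hw
  have hw_deriv : ∀ r ∈ Ioo s t, HasDerivWithinAt w (1 + P / r ^ 2) (Ioo s t) r := by
    intro r hr
    have hr0 : 0 < r := lt_trans hs hr.1
    have h1 : HasDerivAt (fun x : ℝ => P * x⁻¹) (P * (-(r ^ 2)⁻¹)) r :=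
      (hasDerivAt_inv hr0.ne').const_mul P
    have h2 := (hasDerivAt_id r).sub h1
    have h3 : HasDerivAt w (1 - P * (-(r ^ 2)⁻¹)) r := by
      have e : w = (id - fun x => P * x⁻¹) := by
        funext y
        simp [hw, div_eq_mul_inv]
      rw [e]
      exact h2
    have h4 : 1 - P * (-(r ^ 2)⁻¹) = 1 + P / r ^ 2 := by
      field_simp
      ring
    rw [h4] at h3
    exact h3.hasDerivWithinAt
  have hcont : ContinuousOn w (Icc s t) := by
    apply ContinuousOn.sub continuousOn_id
    exact continuousOn_const.div continuousOn_id
      (fun x hx => ne_of_gt (lt_of_lt_of_le hs hx.1))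
  have hmono : StrictMonoOn w (Icc s t) := by
    apply strictMonoOn_of_deriv_pos (convex_Icc s t) hcont
    intro x hx
    rw [interior_Icc] at hx
    have hx0 : 0 < x := lt_trans hs hx.1
    have h1 : HasDerivAt (fun y : ℝ => P * y⁻¹) (P * (-(x ^ 2)⁻¹)) x :=
      (hasDerivAt_inv hx0.ne').const_mul P
    have h2 := (hasDerivAt_id x).sub h1
    have h3 : HasDerivAt w (1 - P * (-(x ^ 2)⁻¹)) x := by
      have e : w = (id - fun x => P * x⁻¹) := by
        funext y
        simp [hw, div_eq_mul_inv]
      rw [e]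
      exact h2
    rw [h3.deriv]
    have : 1 - P * (-(x ^ 2)⁻¹) = 1 + P / x ^ 2 := by field_simp; ring
    rw [this]
    positivity
  have hws : w s = -A := by
    rw [hw]
    simp only
    rw [hP, hA, mul_div_cancel_left₀ t hs.ne']
    ring
  have hwt : w t = A := by
    rw [hw]
    simp only
    rw [hP, hA, mul_div_assoc, div_self (by linarith : t ≠ 0), mul_one]
  have himg : w '' Ioo s t = Ioo (-A) A := by
    apply Subset.antisymm
    · rintro _ ⟨r, hr, rfl⟩
      refine ⟨?_, ?_⟩
      · rw [← hws]
        exact hmono (left_mem_Icc.2 hst.le) (Ioo_subset_Icc_self hr) hr.1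
      · rw [← hwt]
        exact hmono (Ioo_subset_Icc_self hr) (right_mem_Icc.2 hst.le) hr.2
    · have h := intermediate_value_Ioo hst.le hcont
      rw [hws, hwt] at h
      exact h
  have hinj : InjOn w (Ioo s t) := hmono.injOn.mono Ioo_subset_Icc_self
  have hCoV := integral_image_eq_integral_abs_deriv_smul measurableSet_Ioo hw_deriv hinj
    (fun x => (A ^ 2 - x ^ 2) ^ (α - 1) * ((1 + x / Real.sqrt (x ^ 2 + 4 * P)) / 2))
  rw [himg, half_value hα hA0 hP0] at hCoV
  have hcongr : ∫ r in Ioo s t,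
      |1 + P / r ^ 2| • ((A ^ 2 - (w r) ^ 2) ^ (α - 1)
        * ((1 + (w r) / Real.sqrt ((w r) ^ 2 + 4 * P)) / 2))
      = ∫ r in Ioo s t,
        (t ^ 2 - r ^ 2) ^ (α - 1) * ((r ^ 2 - s ^ 2) ^ (α - 1) * r ^ (2 - 2 * α)) :=
    setIntegral_congr_fun measurableSet_Ioo fun r hr => kernel_pointwise hs hst hP hA hr
  rw [← hcongr, ← hCoV]
  have h2A : (2 * A) ^ (2 * α - 1) = 2 ^ (2 * α - 1) * A ^ (2 * α - 1) :=
    Real.mul_rpow (by norm_num) hA0.le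
  rw [h2A]
  rw [show (2:ℝ)⁻¹ = 2 ^ (-1 : ℝ) by rw [Real.rpow_neg_one],
    show (2:ℝ) ^ (-1:ℝ) * (2 ^ (2 * α - 1) * A ^ (2 * α - 1)
      * (Real.Gamma α ^ 2 / Real.Gamma (2 * α)))
      = ((2:ℝ) ^ (-1:ℝ) * 2 ^ (2 * α - 1)) * A ^ (2 * α - 1)
      * (Real.Gamma α ^ 2 / Real.Gamma (2 * α)) by ring,
    ← Real.rpow_add (by norm_num : (0:ℝ) < 2), show -1 + (2 * α - 1) = 2 * α - 2 by ring]

/-- The left-sided composition formula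
`I^α_{+,2}( s^{1-2α} (I^α_{+,2} f)(s) )(t) = 2^{2α} (I^{2α}_+ ( s f(s) ))(t)` for a.e. `t > 0`,
provided all integrals converge absolutely. -/
theorem ek_plus_composition_rl (α : ℝ) (hα : 0 < α) (f : ℝ → ℝ)
    (hmeas : Measurable f)
    (habs : ∀ t > (0 : ℝ),
      ∫⁻ r in Ioc (0 : ℝ) t,
        ENNReal.ofReal (r ^ (1 - 2 * α) * r * (t ^ 2 - r ^ 2) ^ (α - 1)) *
          (∫⁻ s in Ioc (0 : ℝ) r, ENNReal.ofReal (|f s| * s * (r ^ 2 - s ^ 2) ^ (α - 1))) < ⊤) :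
    ∀ᵐ t ∂(volume.restrict (Ioi (0 : ℝ))),
      EKplus α (fun s => s ^ (1 - 2 * α) * EKplus α f s) t
        = 2 ^ (2 * α) * RLplus (2 * α) (fun s => s * f s) t := by
  refine (ae_restrict_mem measurableSet_Ioi).mono fun t ht => ?_
  have ht0 : 0 < t := ht
  have hΓ : Real.Gamma α ≠ 0 := (Real.Gamma_pos_of_pos hα).ne'
  have hΓ2 : Real.Gamma (2 * α) ≠ 0 := (Real.Gamma_pos_of_pos (by linarith)).ne'
  set W : ℝ → ℝ := fun r => r ^ (1 - 2 * α) * r * (t ^ 2 - r ^ 2) ^ (α - 1) with hW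
  set q : ℝ → ℝ → ℝ := fun r x => f x * x * (r ^ 2 - x ^ 2) ^ (α - 1) with hq
  set G : ℝ → ℝ → ℝ := fun r x => (Ioc (0:ℝ) r).indicator (fun y => W r * q r y) x with hG
  have hWnn : ∀ r ∈ Ioc (0:ℝ) t, 0 ≤ W r := fun r hr =>
    mul_nonneg (mul_nonneg (Real.rpow_nonneg hr.1.le _) hr.1.le)
      (Real.rpow_nonneg (by nlinarith [hr.1, hr.2] : (0:ℝ) ≤ t ^ 2 - r ^ 2) _)
  have hGmeas : Measurable (Function.uncurry G) := by
    have hGeq : Function.uncurry G = fun p : ℝ × ℝ =>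
        ({p : ℝ × ℝ | 0 < p.2 ∧ p.2 ≤ p.1}).indicator (fun p => W p.1 * q p.1 p.2) p := by
      funext p
      simp only [Function.uncurry, hG, Set.indicator_apply, mem_Ioc, mem_setOf_eq]
    rw [hGeq]
    refine Measurable.indicator ?_ ?_
    · simp only [hW, hq]
      have m0 : ∀ c : ℝ, Measurable (fun y : ℝ => y ^ c) := fun c => my_measurable_rpow_const c
      have m1 : Measurable (fun p : ℝ × ℝ => p.1 ^ (1 - 2 * α)) :=
        (m0 _).comp measurable_fst
      have m2 : Measurable (fun p : ℝ × ℝ => (t ^ 2 - p.1 ^ 2) ^ (α - 1)) :=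
        (m0 _).comp (measurable_const.sub (measurable_fst.pow_const 2))
      have m3 : Measurable (fun p : ℝ × ℝ => (p.1 ^ 2 - p.2 ^ 2) ^ (α - 1)) :=
        (m0 _).comp ((measurable_fst.pow_const 2).sub (measurable_snd.pow_const 2))
      have m4 : Measurable (fun p : ℝ × ℝ => f p.2) := hmeas.comp measurable_snd
      exact ((m1.mul measurable_fst).mul m2).mul ((m4.mul measurable_snd).mul m3)
    · exact (measurableSet_lt measurable_const measurable_snd).inter
        (measurableSet_le measurable_snd measurable_fst)
  have hGint : Integrable (Function.uncurry G)
      ((volume.restrict (Ioc (0:ℝ) t)).prod (volume.restrict (Ioc (0:ℝ) t))) := by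
    refine ⟨hGmeas.aestronglyMeasurable, ?_⟩
    rw [hasFiniteIntegral_def, lintegral_prod _ hGmeas.enorm.aemeasurable]
    simp only [enorm_eq_nnnorm]
    have heq : (∫⁻ r in Ioc (0:ℝ) t, ∫⁻ x in Ioc (0:ℝ) t,
          (‖Function.uncurry G (r, x)‖₊ : ENNReal))
        = ∫⁻ r in Ioc (0 : ℝ) t,
            ENNReal.ofReal (r ^ (1 - 2 * α) * r * (t ^ 2 - r ^ 2) ^ (α - 1)) *
              ∫⁻ x in Ioc (0 : ℝ) r,
                ENNReal.ofReal (|f x| * x * (r ^ 2 - x ^ 2) ^ (α - 1)) := by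
      refine lintegral_congr_ae ?_
      filter_upwards [ae_restrict_mem measurableSet_Ioc] with r hr
      have h1 : ∀ x, ((‖Function.uncurry G (r, x)‖₊ : ENNReal))
          = (Ioc (0:ℝ) r).indicator (fun x => (‖W r * q r x‖₊ : ENNReal)) x := by
        intro x
        have e : Function.uncurry G (r, x)
            = (Ioc (0:ℝ) r).indicator (fun y => W r * q r y) x := rfl
        rw [e, nnnorm_indicator_eq_indicator_nnnorm]
        by_cases hx : x ∈ Ioc (0:ℝ) r <;> simp [Set.indicator_apply, hx]
      simp_rw [h1]
      rw [lintegral_indicator measurableSet_Ioc,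
        Measure.restrict_restrict measurableSet_Ioc, Set.Ioc_inter_Ioc,
        show ((0:ℝ) ⊔ 0) = 0 by simp, show r ⊓ t = r from min_eq_left hr.2]
      have h2 : ∀ᵐ x ∂(volume.restrict (Ioc (0:ℝ) r)),
          ((‖W r * q r x‖₊ : ENNReal)) = ENNReal.ofReal (W r) *
            ENNReal.ofReal (|f x| * x * (r ^ 2 - x ^ 2) ^ (α - 1)) := by
        filter_upwards [ae_restrict_mem measurableSet_Ioc] with x hx
        rw [← enorm_eq_nnnorm, Real.enorm_eq_ofReal_abs, abs_mul, abs_of_nonneg (hWnn r hr),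
          ← ENNReal.ofReal_mul (hWnn r hr)]
        congr 2
        simp only [hq]
        rw [abs_mul, abs_mul, abs_of_nonneg hx.1.le,
          abs_of_nonneg (Real.rpow_nonneg
            (by nlinarith [hx.1, hx.2] : (0:ℝ) ≤ r ^ 2 - x ^ 2) _)]
      rw [lintegral_congr_ae h2, lintegral_const_mul' _ _ ENNReal.ofReal_ne_top]
    rw [heq]
    exact habs t ht0
  have step1 : EKplus α (fun x => x ^ (1 - 2 * α) * EKplus α f x) t
      = (2 * (Real.Gamma α)⁻¹) * ((2 * (Real.Gamma α)⁻¹)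
          * ∫ r in Ioc (0:ℝ) t, ∫ x in Ioc (0:ℝ) t, G r x) := by
    simp only [EKplus]
    have hinner : (∫ r in Ioc (0:ℝ) t,
          (r ^ (1 - 2 * α) * (2 * (Real.Gamma α)⁻¹ *
            ∫ x in Ioc (0:ℝ) r, f x * x * (r ^ 2 - x ^ 2) ^ (α - 1))) * r
              * (t ^ 2 - r ^ 2) ^ (α - 1))
        = ∫ r in Ioc (0:ℝ) t, (2 * (Real.Gamma α)⁻¹) * ∫ x in Ioc (0:ℝ) t, G r x := by
      refine setIntegral_congr_fun measurableSet_Ioc fun r hr => ?_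
      have h1 : ∫ x in Ioc (0:ℝ) t, G r x = W r * ∫ x in Ioc (0:ℝ) r, q r x := by
        simp only [hG]
        rw [setIntegral_indicator measurableSet_Ioc, Set.Ioc_inter_Ioc,
          show ((0:ℝ) ⊔ 0) = 0 by simp, show t ⊓ r = r from min_eq_right hr.2,
          integral_const_mul]
      rw [h1]
      simp only [hW, hq]
      ring
    rw [hinner, integral_const_mul]
  have hswap : (∫ r in Ioc (0:ℝ) t, ∫ x in Ioc (0:ℝ) t, G r x)
      = ∫ x in Ioc (0:ℝ) t, ∫ r in Ioc (0:ℝ) t, G r x := integral_integral_swap hGint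
  have step3 : (∫ x in Ioc (0:ℝ) t, ∫ r in Ioc (0:ℝ) t, G r x)
      = (2 ^ (2 * α - 2) * (Real.Gamma α ^ 2 / Real.Gamma (2 * α)))
          * ∫ x in Ioc (0:ℝ) t, (x * f x) * (t - x) ^ (2 * α - 1) := by
    rw [← integral_const_mul]
    rw [integral_Ioc_eq_integral_Ioo, integral_Ioc_eq_integral_Ioo
      (f := fun x => (2 ^ (2 * α - 2) * (Real.Gamma α ^ 2 / Real.Gamma (2 * α)))
        * ((x * f x) * (t - x) ^ (2 * α - 1)))]
    refine setIntegral_congr_fun measurableSet_Ioo fun x hx => ?_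
    have hx0 : 0 < x := hx.1
    have hxt : x < t := hx.2
    have h1 : ∀ r, G r x = (Ici x).indicator (fun r => W r * q r x) r := by
      intro r
      simp only [hG, Set.indicator_apply, mem_Ioc, mem_Ici]
      by_cases h : x ≤ r <;> simp [h, hx0]
    simp_rw [h1]
    rw [setIntegral_indicator measurableSet_Ici,
      show Ioc (0:ℝ) t ∩ Ici x = Icc x t from by
        ext y
        simp only [mem_inter_iff, mem_Ioc, mem_Icc, mem_Ici]
        constructor
        · rintro ⟨⟨_, h2⟩, h3⟩; exact ⟨h3, h2⟩
        · rintro ⟨h3, h2⟩; exact ⟨⟨lt_of_lt_of_le hx0 h3, h2⟩, h3⟩,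
      integral_Icc_eq_integral_Ioc, integral_Ioc_eq_integral_Ioo]
    have h2 : (∫ r in Ioo x t, W r * q r x)
        = (f x * x) * ∫ r in Ioo x t,
            (t ^ 2 - r ^ 2) ^ (α - 1) * ((r ^ 2 - x ^ 2) ^ (α - 1) * r ^ (2 - 2 * α)) := by
      rw [← integral_const_mul]
      refine setIntegral_congr_fun measurableSet_Ioo fun r hr => ?_
      have hr0 : 0 < r := lt_trans hx0 hr.1
      have hrr : r ^ (1 - 2 * α) * r = r ^ (2 - 2 * α) := by
        have h3 := Real.rpow_add hr0 (1 - 2 * α) 1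
        rw [Real.rpow_one] at h3
        rw [← h3]
        congr 1
        ring
      simp only [hW, hq]
      rw [show r ^ (1 - 2 * α) * r * (t ^ 2 - r ^ 2) ^ (α - 1)
            * (f x * x * (r ^ 2 - x ^ 2) ^ (α - 1))
          = (r ^ (1 - 2 * α) * r) * ((t ^ 2 - r ^ 2) ^ (α - 1)
            * (f x * x * (r ^ 2 - x ^ 2) ^ (α - 1))) by ring, hrr]
      ring
    rw [h2, kernel_value hα hx0 hxt]
    ring
  rw [step1, hswap, step3, RLplus]
  have h4 : (2:ℝ) ^ (2 * α) = 4 * 2 ^ (2 * α - 2) := by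
    rw [show 2 * α = 2 + (2 * α - 2) by ring, Real.rpow_add (by norm_num : (0:ℝ) < 2)]
    norm_num
  rw [h4]
  field_simp
  ring
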